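/- Comparison principle from submodularity: let d, d′ ∈ L^∞(Ω) with d′ ≤ d almost everywhere, and let w, w′ be the respective minimizers of u ↦ (1/2ε)∫_Ω |u−d|² dρ + TV_ε(u) and u ↦ (1/2ε)∫_Ω |u−d′|² dρ + TV_ε(u) over L²(Ω). Then w′ ≤ w almost everywhere in Ω. -/

import Mathlib

open MeasureTheory
open scoped ENNReal


open MeasureTheory
open scoped ENNReal

/-- Subadditivity of the lower Lebesgue integral for products `(p+q)*R` where `p, q` are
measurable and finite, but `R` is completely arbitrary. -/
lemma lintegral_add_mul_le_core {α : Type*} [MeasurableSpace α] (μ : Measure α)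
    (p q R : α → ℝ≥0∞) (hp : Measurable p) (hq : Measurable q)
    (hpt : ∀ x, p x ≠ ⊤) (hqt : ∀ x, q x ≠ ⊤) :
    ∫⁻ x, (p x + q x) * R x ∂μ ≤ ∫⁻ x, p x * R x ∂μ + ∫⁻ x, q x * R x ∂μ := by
  rw [lintegral_def]
  refine iSup₂_le fun ψ hψ => ?_
  have hst : ∀ x, p x + q x ≠ ⊤ := fun x => ENNReal.add_ne_top.mpr ⟨hpt x, hqt x⟩
  have key1 : ∀ x, (p x / (p x + q x)) * ψ x ≤ p x * R x := by
    intro x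
    by_cases h0 : p x + q x = 0
    · have hp0 : p x = 0 := by
        rcases add_eq_zero.mp h0 with ⟨h, _⟩; exact h
      simp [hp0]
    · calc (p x / (p x + q x)) * ψ x ≤ (p x / (p x + q x)) * ((p x + q x) * R x) :=
            mul_le_mul_right (hψ x) _
        _ = (p x / (p x + q x) * (p x + q x)) * R x := by rw [mul_assoc]
        _ = p x * R x := by rw [ENNReal.div_mul_cancel h0 (hst x)]
  have key2 : ∀ x, (q x / (p x + q x)) * ψ x ≤ q x * R x := by
    intro x
    by_cases h0 : p x + q x = 0
    · have hq0 : q x = 0 := by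
        rcases add_eq_zero.mp h0 with ⟨_, h⟩; exact h
      simp [hq0]
    · calc (q x / (p x + q x)) * ψ x ≤ (q x / (p x + q x)) * ((p x + q x) * R x) :=
            mul_le_mul_right (hψ x) _
        _ = (q x / (p x + q x) * (p x + q x)) * R x := by rw [mul_assoc]
        _ = q x * R x := by rw [ENNReal.div_mul_cancel h0 (hst x)]
  have keysum : ∀ x, (p x / (p x + q x)) * ψ x + (q x / (p x + q x)) * ψ x = ψ x := by
    intro x
    by_cases h0 : p x + q x = 0
    · have hψ0 : ψ x = 0 := by
        have := hψ x
        simpa [h0] using this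
      simp [hψ0]
    · rw [← add_mul, ENNReal.div_add_div_same, ENNReal.div_self h0 (hst x), one_mul]
  have hm1 : Measurable fun x => (p x / (p x + q x)) * ψ x :=
    (hp.div (hp.add hq)).mul ψ.measurable
  calc ψ.lintegral μ = ∫⁻ x, ψ x ∂μ := (ψ.lintegral_eq_lintegral μ).symm
    _ = ∫⁻ x, ((p x / (p x + q x)) * ψ x + (q x / (p x + q x)) * ψ x) ∂μ :=
        lintegral_congr fun x => (keysum x).symm
    _ = (∫⁻ x, (p x / (p x + q x)) * ψ x ∂μ) + ∫⁻ x, (q x / (p x + q x)) * ψ x ∂μ :=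
        lintegral_add_left hm1 _
    _ ≤ _ := add_le_add (lintegral_mono key1) (lintegral_mono key2)

lemma lintegral_add_mul_le {α : Type*} [MeasurableSpace α] (μ : Measure α)
    (p q R : α → ℝ≥0∞) (hp : AEMeasurable p μ) (hq : AEMeasurable q μ)
    (hpt : ∀ᵐ x ∂μ, p x ≠ ⊤) (hqt : ∀ᵐ x ∂μ, q x ≠ ⊤) :
    ∫⁻ x, (p x + q x) * R x ∂μ ≤ ∫⁻ x, p x * R x ∂μ + ∫⁻ x, q x * R x ∂μ := by
  set p₀ : α → ℝ≥0∞ := fun x => ((hp.mk p x).toNNReal : ℝ≥0∞) with hp₀def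
  set q₀ : α → ℝ≥0∞ := fun x => ((hq.mk q x).toNNReal : ℝ≥0∞) with hq₀def
  have hp₀ : p =ᵐ[μ] p₀ := by
    filter_upwards [hp.ae_eq_mk, hpt] with x h1 h2
    rw [hp₀def]
    simp only
    rw [← h1, ENNReal.coe_toNNReal h2]
  have hq₀ : q =ᵐ[μ] q₀ := by
    filter_upwards [hq.ae_eq_mk, hqt] with x h1 h2
    rw [hq₀def]
    simp only
    rw [← h1, ENNReal.coe_toNNReal h2]
  have hmp : Measurable p₀ := (ENNReal.measurable_toNNReal.comp hp.measurable_mk).coe_nnreal_ennreal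
  have hmq : Measurable q₀ := (ENNReal.measurable_toNNReal.comp hq.measurable_mk).coe_nnreal_ennreal
  calc ∫⁻ x, (p x + q x) * R x ∂μ = ∫⁻ x, (p₀ x + q₀ x) * R x ∂μ := by
        refine lintegral_congr_ae ?_
        filter_upwards [hp₀, hq₀] with x h1 h2; rw [h1, h2]
    _ ≤ ∫⁻ x, p₀ x * R x ∂μ + ∫⁻ x, q₀ x * R x ∂μ :=
        lintegral_add_mul_le_core μ p₀ q₀ R hmp hmq
          (fun x => ENNReal.coe_ne_top) (fun x => ENNReal.coe_ne_top)
    _ = ∫⁻ x, p x * R x ∂μ + ∫⁻ x, q x * R x ∂μ := by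
        congr 1 <;> refine lintegral_congr_ae ?_
        · filter_upwards [hp₀] with x h1; rw [h1]
        · filter_upwards [hq₀] with x h1; rw [h1]

lemma keyreal (a b p q r : ℝ) (hr : 0 ≤ r) (hqp : q ≤ p) :
    (a ⊔ b - p) ^ 2 * r + (a ⊓ b - q) ^ 2 * r ≤ (a - p) ^ 2 * r + (b - q) ^ 2 * r := by
  rcases le_total b a with h | h
  · rw [sup_eq_left.mpr h, inf_eq_right.mpr h]
  · rw [sup_eq_right.mpr h, inf_eq_left.mpr h]
    have h1 : (b - p) ^ 2 + (a - q) ^ 2 ≤ (a - p) ^ 2 + (b - q) ^ 2 := by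
      nlinarith [mul_nonneg (sub_nonneg.mpr h) (sub_nonneg.mpr hqp)]
    nlinarith [mul_le_mul_of_nonneg_right h1 hr]


/-- Comparison principle from submodularity: if `d′ ≤ d` a.e. and `w, w′` are
the (unique) minimizers of `u ↦ (1/2ε)∫_Ω |u−d|² dρ + TV_ε(u)` and the
corresponding energy with data `d′`, for a proper convex submodular
functional `TV_ε`, then `w′ ≤ w` a.e. in `Ω`. -/
theorem comparison_principle
    (N : ℕ) (Ω : Set (EuclideanSpace ℝ (Fin N)))
    (hΩopen : IsOpen Ω) (hΩbdd : Bornology.IsBounded Ω) (hΩconn : IsConnected Ω)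
    (ρ : EuclideanSpace ℝ (Fin N) → ℝ)
    (cρ : ℝ) (hcρ : 0 < cρ) (hρlb : ∀ x ∈ Ω, cρ ≤ ρ x)
    (ε : ℝ) (hε : 0 < ε)
    (J : (EuclideanSpace ℝ (Fin N) → ℝ) → ℝ≥0∞)
    (hJproper : ∃ u, J u ≠ ⊤)
    (hJconvex : ∀ u v : EuclideanSpace ℝ (Fin N) → ℝ, ∀ t : ℝ, 0 ≤ t → t ≤ 1 →
      J (fun x => t * u x + (1 - t) * v x)
        ≤ ENNReal.ofReal t * J u + ENNReal.ofReal (1 - t) * J v)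
    (hJsub : ∀ u v : EuclideanSpace ℝ (Fin N) → ℝ,
      J (fun x => u x ⊔ v x) + J (fun x => u x ⊓ v x) ≤ J u + J v)
    (d d' : EuclideanSpace ℝ (Fin N) → ℝ)
    (hd : MemLp d ⊤ (volume.restrict Ω)) (hd' : MemLp d' ⊤ (volume.restrict Ω))
    (hdd' : ∀ᵐ x ∂(volume.restrict Ω), d' x ≤ d x)
    (E : (EuclideanSpace ℝ (Fin N) → ℝ) → (EuclideanSpace ℝ (Fin N) → ℝ) → ℝ≥0∞)
    (hE : ∀ g u, E g u = (ENNReal.ofReal (2 * ε))⁻¹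
        * (∫⁻ x in Ω, ENNReal.ofReal ((u x - g x) ^ 2 * ρ x)) + J u)
    (w w' : EuclideanSpace ℝ (Fin N) → ℝ)
    (hw : MemLp w 2 (volume.restrict Ω)) (hw' : MemLp w' 2 (volume.restrict Ω))
    (hwmin : ∀ v, MemLp v 2 (volume.restrict Ω) → E d w ≤ E d v)
    (hwuniq : ∀ v, MemLp v 2 (volume.restrict Ω) → E d v = E d w →
      v =ᵐ[volume.restrict Ω] w)
    (hw'min : ∀ v, MemLp v 2 (volume.restrict Ω) → E d' w' ≤ E d' v)
    (hw'uniq : ∀ v, MemLp v 2 (volume.restrict Ω) → E d' v = E d' w' →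
      v =ᵐ[volume.restrict Ω] w') :
    ∀ᵐ x ∂(volume.restrict Ω), w' x ≤ w x := by
  have hΩm : MeasurableSet Ω := hΩopen.measurableSet
  set μ : Measure (EuclideanSpace ℝ (Fin N)) := volume.restrict Ω with hμdef
  have hρae : ∀ᵐ x ∂μ, 0 ≤ ρ x := by
    filter_upwards [ae_restrict_mem hΩm] with x hx
    exact le_trans hcρ.le (hρlb x hx)
  have hsupmem : MemLp (fun x => w x ⊔ w' x) 2 μ := hw.sup hw'
  have hinfmem : MemLp (fun x => w x ⊓ w' x) 2 μ := hw.inf hw'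
  -- a.e.-measurable squares
  have hwd : AEMeasurable (fun x => (w x - d x) ^ 2) μ := by
    have h1 : AEMeasurable (fun x => w x - d x) μ :=
      hw.aestronglyMeasurable.aemeasurable.sub hd.aestronglyMeasurable.aemeasurable
    exact h1.pow_const 2
  have hw'd' : AEMeasurable (fun x => (w' x - d' x) ^ 2) μ := by
    have h1 : AEMeasurable (fun x => w' x - d' x) μ :=
      hw'.aestronglyMeasurable.aemeasurable.sub hd'.aestronglyMeasurable.aemeasurable
    exact h1.pow_const 2
  -- the key integral inequality
  have hAB : (∫⁻ x in Ω, ENNReal.ofReal ((((fun x => w x ⊔ w' x) x) - d x) ^ 2 * ρ x))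
      + (∫⁻ x in Ω, ENNReal.ofReal ((((fun x => w x ⊓ w' x) x) - d' x) ^ 2 * ρ x))
      ≤ (∫⁻ x in Ω, ENNReal.ofReal ((w x - d x) ^ 2 * ρ x))
        + (∫⁻ x in Ω, ENNReal.ofReal ((w' x - d' x) ^ 2 * ρ x)) := by
    calc (∫⁻ x in Ω, ENNReal.ofReal (((w x ⊔ w' x) - d x) ^ 2 * ρ x))
          + (∫⁻ x in Ω, ENNReal.ofReal (((w x ⊓ w' x) - d' x) ^ 2 * ρ x))
        ≤ ∫⁻ x in Ω, (ENNReal.ofReal (((w x ⊔ w' x) - d x) ^ 2 * ρ x)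
            + ENNReal.ofReal (((w x ⊓ w' x) - d' x) ^ 2 * ρ x)) ∂volume :=
          le_lintegral_add _ _
      _ ≤ ∫⁻ x in Ω, (ENNReal.ofReal ((w x - d x) ^ 2)
            + ENNReal.ofReal ((w' x - d' x) ^ 2)) * ENNReal.ofReal (ρ x) ∂volume := by
          refine lintegral_mono_ae ?_
          filter_upwards [hdd', hρae] with x h1 h2
          have key := keyreal (w x) (w' x) (d x) (d' x) (ρ x) h2 h1
          have e1 : ENNReal.ofReal (((w x ⊔ w' x) - d x) ^ 2 * ρ x)
              + ENNReal.ofReal (((w x ⊓ w' x) - d' x) ^ 2 * ρ x)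
              = ENNReal.ofReal (((w x ⊔ w' x) - d x) ^ 2 * ρ x
                + ((w x ⊓ w' x) - d' x) ^ 2 * ρ x) :=
            (ENNReal.ofReal_add (mul_nonneg (sq_nonneg _) h2) (mul_nonneg (sq_nonneg _) h2)).symm
          rw [e1]
          have e2 : (ENNReal.ofReal ((w x - d x) ^ 2) + ENNReal.ofReal ((w' x - d' x) ^ 2))
              * ENNReal.ofReal (ρ x)
              = ENNReal.ofReal ((w x - d x) ^ 2 * ρ x + (w' x - d' x) ^ 2 * ρ x) := by
            rw [ENNReal.ofReal_add (mul_nonneg (sq_nonneg _) h2) (mul_nonneg (sq_nonneg _) h2),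
              ENNReal.ofReal_mul (sq_nonneg _), ENNReal.ofReal_mul (sq_nonneg _), add_mul]
          rw [e2]
          exact ENNReal.ofReal_le_ofReal key
      _ ≤ (∫⁻ x in Ω, ENNReal.ofReal ((w x - d x) ^ 2) * ENNReal.ofReal (ρ x) ∂volume)
            + ∫⁻ x in Ω, ENNReal.ofReal ((w' x - d' x) ^ 2) * ENNReal.ofReal (ρ x) ∂volume := by
          have := lintegral_add_mul_le μ
            (fun x => ENNReal.ofReal ((w x - d x) ^ 2))
            (fun x => ENNReal.ofReal ((w' x - d' x) ^ 2))
            (fun x => ENNReal.ofReal (ρ x))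
            hwd.ennreal_ofReal hw'd'.ennreal_ofReal
            (Filter.Eventually.of_forall fun x => ENNReal.ofReal_ne_top)
            (Filter.Eventually.of_forall fun x => ENNReal.ofReal_ne_top)
          exact this
      _ = (∫⁻ x in Ω, ENNReal.ofReal ((w x - d x) ^ 2 * ρ x))
            + ∫⁻ x in Ω, ENNReal.ofReal ((w' x - d' x) ^ 2 * ρ x) := by
          congr 1 <;> refine lintegral_congr_ae ?_ <;>
            filter_upwards [hρae] with x h2 <;>
            rw [ENNReal.ofReal_mul (sq_nonneg _)]
  -- the key energy inequality
  have hchain : E d (fun x => w x ⊔ w' x) + E d' (fun x => w x ⊓ w' x) ≤ E d w + E d' w' := by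
    simp only [hE]
    have expand : ∀ (X Y JX JY : ℝ≥0∞),
        ((ENNReal.ofReal (2 * ε))⁻¹ * X + JX) + ((ENNReal.ofReal (2 * ε))⁻¹ * Y + JY)
        = (ENNReal.ofReal (2 * ε))⁻¹ * (X + Y) + (JX + JY) := by
      intros; ring
    rw [expand, expand]
    exact add_le_add (mul_le_mul_right hAB _) (hJsub w w')
  -- conclude by cases
  by_cases hQ : E d' w' = ⊤
  · have h1 : E d' (fun x => w x ⊓ w' x) = E d' w' := by
      rw [hQ]
      exact top_le_iff.mp (hQ ▸ hw'min _ hinfmem)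
    filter_upwards [hw'uniq _ hinfmem h1] with x hx
    exact inf_eq_right.mp hx
  by_cases hP : E d w = ⊤
  · have h1 : E d (fun x => w x ⊔ w' x) = E d w := by
      rw [hP]
      exact top_le_iff.mp (hP ▸ hwmin _ hsupmem)
    filter_upwards [hwuniq _ hsupmem h1] with x hx
    exact sup_eq_left.mp hx
  · have hle1 : E d w + E d' (fun x => w x ⊓ w' x) ≤ E d w + E d' w' :=
      le_trans (add_le_add_left (hwmin _ hsupmem) _) hchain
    have hle2 : E d' (fun x => w x ⊓ w' x) ≤ E d' w' :=
      (ENNReal.add_le_add_iff_left hP).mp hle1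
    have heq : E d' (fun x => w x ⊓ w' x) = E d' w' :=
      le_antisymm hle2 (hw'min _ hinfmem)
    filter_upwards [hw'uniq _ hinfmem heq] with x hx
    exact inf_eq_right.mp hx
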